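/- Let d ≥ 1, let U ⊆ ℝ^d be a connected open set, and let g be real analytic on U and not constant on U. Then for every set B ⊆ ℝ of one-dimensional Lebesgue measure zero, the preimage {x ∈ U : g(x) ∈ B} has d-dimensional Lebesgue measure zero. -/

import Mathlib

open MeasureTheory

open Set

set_option maxHeartbeats 1000000

lemma slab_null (d : ℕ) (i : Fin d) {M : Set ℝ} (hM : MeasurableSet M) (h0 : volume M = 0) :
    volume {y : EuclideanSpace ℝ (Fin d) | y i ∈ M} = 0 := by
  have hpre : {y : EuclideanSpace ℝ (Fin d) | y i ∈ M}
      = (MeasurableEquiv.toLp 2 (Fin d → ℝ)).symm ⁻¹' {u : Fin d → ℝ | u i ∈ M} := rfl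
  have hmeas : MeasurableSet {u : Fin d → ℝ | u i ∈ M} := (measurable_pi_apply i) hM
  rw [hpre, (EuclideanSpace.volume_preserving_symm_measurableEquiv_toLp (Fin d)).measure_preimage
    hmeas.nullMeasurableSet]
  classical
  have hT : {u : Fin d → ℝ | u i ∈ M}
      = Set.pi Set.univ (fun j => if j = i then M else Set.univ) := by
    ext u
    simp only [mem_setOf_eq, mem_pi, mem_univ, forall_true_left]
    constructor
    · intro h j
      by_cases hj : j = i <;> simp [hj, h]
    · intro h
      simpa using h i
  rw [hT, volume_pi_pi]
  exact Finset.prod_eq_zero (Finset.mem_univ i) (by simp [h0])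

lemma det_aux (d : ℕ) (i : Fin d) (c : EuclideanSpace ℝ (Fin d) →L[ℝ] ℝ) :
    (ContinuousLinearMap.id ℝ (EuclideanSpace ℝ (Fin d)) +
      (c - EuclideanSpace.proj i).smulRight (EuclideanSpace.single i 1)).det
    = c (EuclideanSpace.single i 1) := by
  classical
  set A := ContinuousLinearMap.id ℝ (EuclideanSpace ℝ (Fin d)) +
      (c - EuclideanSpace.proj i).smulRight (EuclideanSpace.single i 1)
  have hdet : A.det = LinearMap.det (A : EuclideanSpace ℝ (Fin d) →ₗ[ℝ] EuclideanSpace ℝ (Fin d)) := rfl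
  set b := (EuclideanSpace.basisFun (Fin d) ℝ).toBasis
  set w : Fin d → ℝ := fun k => c (EuclideanSpace.single k 1)
  have hmat : LinearMap.toMatrix b b (A : EuclideanSpace ℝ (Fin d) →ₗ[ℝ] EuclideanSpace ℝ (Fin d))
      = Matrix.updateRow 1 i w := by
    ext j k
    rw [LinearMap.toMatrix_apply]
    have hbk : b k = EuclideanSpace.single k 1 := by
      simp [b, EuclideanSpace.basisFun_apply]
    have hrepr : ∀ z : EuclideanSpace ℝ (Fin d), b.repr z j = z j := fun z => rfl
    rw [hrepr, hbk, ContinuousLinearMap.coe_coe]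
    have : A (EuclideanSpace.single k 1) = EuclideanSpace.single k 1 +
        (c (EuclideanSpace.single k 1) - (EuclideanSpace.single k 1 : EuclideanSpace ℝ (Fin d)) i)
          • (EuclideanSpace.single i 1 : EuclideanSpace ℝ (Fin d)) := by
      simp [A, ContinuousLinearMap.smulRight_apply]
    rw [this]
    simp only [PiLp.add_apply, PiLp.smul_apply, EuclideanSpace.single_apply, smul_eq_mul,
      Matrix.updateRow_apply, Matrix.one_apply]
    by_cases hji : j = i
    · subst hji
      by_cases hkj : k = j <;> simp [hkj, w, EuclideanSpace.single_apply, eq_comm]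
    · simp [hji, EuclideanSpace.single_apply, eq_comm]
  rw [hdet, ← LinearMap.det_toMatrix b, hmat]
  have hw : w = ∑ k, w k • (1 : Matrix (Fin d) (Fin d) ℝ) k := by
    funext j
    simp [Matrix.one_apply, Finset.sum_ite_eq]
  rw [hw, Matrix.det_updateRow_sum]
  simp [w]

lemma clm_exists_basis_ne_zero (d : ℕ) {c : EuclideanSpace ℝ (Fin d) →L[ℝ] ℝ} (hc : c ≠ 0) :
    ∃ i : Fin d, c (EuclideanSpace.single i 1) ≠ 0 := by
  by_contra h
  push_neg at h
  apply hc
  apply ContinuousLinearMap.coe_injective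
  apply Module.Basis.ext ((EuclideanSpace.basisFun (Fin d) ℝ).toBasis)
  intro i
  have hb : ((EuclideanSpace.basisFun (Fin d) ℝ).toBasis : Fin d → EuclideanSpace ℝ (Fin d)) i
      = EuclideanSpace.single i 1 := by simp [EuclideanSpace.basisFun_apply]
  rw [hb]
  simpa using h i

lemma local_null (d : ℕ) {W : Set (EuclideanSpace ℝ (Fin d))} (hWo : IsOpen W)
    (hWc : Convex ℝ W) {φ : EuclideanSpace ℝ (Fin d) → ℝ} (hφ : AnalyticOnNhd ℝ φ W)
    (i : Fin d) (hdi : ∀ y ∈ W, fderiv ℝ φ y (EuclideanSpace.single i 1) ≠ 0)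
    {B : Set ℝ} (hB : volume B = 0) :
    volume {y | y ∈ W ∧ φ y ∈ B} = 0 := by
  classical
  set M := toMeasurable volume B with hMdef
  have hMmeas : MeasurableSet M := measurableSet_toMeasurable _ _
  have hM0 : volume M = 0 := by rw [hMdef, measure_toMeasurable]; exact hB
  have hBM : B ⊆ M := subset_toMeasurable _ _
  set v : EuclideanSpace ℝ (Fin d) := EuclideanSpace.single i 1 with hvdef
  -- the auxiliary map
  set F : EuclideanSpace ℝ (Fin d) → EuclideanSpace ℝ (Fin d) :=
    fun y => y + (φ y - EuclideanSpace.proj i y) • v with hFdef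
  set F' : EuclideanSpace ℝ (Fin d) → EuclideanSpace ℝ (Fin d) →L[ℝ] EuclideanSpace ℝ (Fin d) :=
    fun y => ContinuousLinearMap.id ℝ (EuclideanSpace ℝ (Fin d)) +
      ((fderiv ℝ φ y) - EuclideanSpace.proj i).smulRight v with hF'def
  have hFderiv : ∀ y ∈ W, HasFDerivAt F (F' y) y := by
    intro y hy
    have h1 : HasFDerivAt φ (fderiv ℝ φ y) y := ((hφ y hy).differentiableAt).hasFDerivAt
    have hproj := (EuclideanSpace.proj (𝕜 := ℝ) i).hasFDerivAt (x := y)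
    have h2 := h1.sub hproj
    have h3 : HasFDerivAt (fun z => (φ z - EuclideanSpace.proj i z) • v)
        (((fderiv ℝ φ y) - EuclideanSpace.proj i).smulRight v) y := h2.smul_const v
    exact (hasFDerivAt_id y).add h3
  -- key coordinate computations
  have hFi : ∀ y, F y i = φ y := by
    intro y
    simp [hFdef, hvdef, EuclideanSpace.single_apply, PiLp.proj]
    show y.ofLp i + (φ y - y.ofLp i) = φ y
    ring
  have hFj : ∀ y, ∀ j, j ≠ i → F y j = y j := by
    intro y j hj
    simp [hFdef, hvdef, EuclideanSpace.single_apply, hj]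
  -- injectivity on W
  have hinj : Set.InjOn F W := by
    intro y hy z hz hyz
    have hcoord : ∀ j, j ≠ i → y j = z j := by
      intro j hj
      have := congrArg (fun u : EuclideanSpace ℝ (Fin d) => u j) hyz
      simpa [hFj y j hj, hFj z j hj] using this
    have hφyz : φ y = φ z := by
      have := congrArg (fun u : EuclideanSpace ℝ (Fin d) => u i) hyz
      simpa [hFi] using this
    have hyi : y i = z i := by
      by_contra hne
      have hzy : z - y = (z i - y i) • v := by
        refine PiLp.ext fun j => ?_
        by_cases hj : j = i
        · subst hj; simp [hvdef, EuclideanSpace.single_apply]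
        · simp [hvdef, EuclideanSpace.single_apply, hj, hcoord j hj]
      set ψ : ℝ → ℝ := fun t => φ (y + t • (z - y)) with hψdef
      have hmem : ∀ t : ℝ, t ∈ Set.Icc (0:ℝ) 1 → y + t • (z - y) ∈ W := by
        intro t ht
        have h1 : (1 - t) • y + t • z ∈ W :=
          hWc hy hz (by linarith [ht.2]) ht.1 (by ring)
        have heq : y + t • (z - y) = (1 - t) • y + t • z := by module
        rw [heq]; exact h1
      have hder : ∀ t ∈ Set.Ioo (0:ℝ) 1,
          HasDerivAt ψ ((z i - y i) * fderiv ℝ φ (y + t • (z - y)) v) t := by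
        intro t ht
        have hmem' := hmem t (Set.mem_Icc_of_Ioo ht)
        have hline : HasDerivAt (fun t : ℝ => y + t • (z - y)) (z - y) t := by
          simpa using ((hasDerivAt_id t).smul_const (z - y)).const_add y
        have hφd : HasFDerivAt φ (fderiv ℝ φ (y + t • (z - y))) (y + t • (z - y)) :=
          ((hφ _ hmem').differentiableAt).hasFDerivAt
        have hcomp := hφd.comp_hasDerivAt t hline
        have h2 : fderiv ℝ φ (y + t • (z - y)) (z - y)
            = (z i - y i) * fderiv ℝ φ (y + t • (z - y)) v := by
          rw [hzy]; simp [smul_eq_mul]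
        rw [h2] at hcomp
        exact hcomp
      have hcont : ContinuousOn ψ (Set.Icc (0:ℝ) 1) := by
        apply ContinuousOn.comp (hφ.continuousOn) ?_ (fun t ht => hmem t ht)
        fun_prop
      have hends : ψ 0 = ψ 1 := by
        simp [hψdef, hφyz]
      obtain ⟨t, ht, hcrit⟩ := exists_hasDerivAt_eq_zero (by norm_num : (0:ℝ) < 1) hcont hends
        (fun t ht => hder t ht)
      have hmem' := hmem t (Set.mem_Icc_of_Ioo ht)
      have hne' := hdi _ hmem'
      have hzi : z i - y i ≠ 0 := sub_ne_zero.mpr (Ne.symm hne)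
      rcases mul_eq_zero.mp hcrit with h | h
      · exact hzi h
      · exact hne' h
    apply PiLp.ext
    intro j
    by_cases hj : j = i
    · subst hj; exact hyi
    · exact hcoord j hj
  -- measurable target set
  set s : Set (EuclideanSpace ℝ (Fin d)) := W ∩ φ ⁻¹' M with hsdef
  have hsmeas : MeasurableSet s := by
    have hrest : ContinuousOn φ W := hφ.continuousOn
    have hsi : s = Subtype.val '' ((W.restrict φ) ⁻¹' M) := by
      ext y
      simp only [hsdef, Set.mem_inter_iff, Set.mem_preimage, Set.mem_image]
      constructor
      · rintro ⟨hyW, hyM⟩; exact ⟨⟨y, hyW⟩, hyM, rfl⟩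
      · rintro ⟨⟨y', hy'⟩, hy'M, rfl⟩; exact ⟨hy', hy'M⟩
    rw [hsi]
    exact hWo.measurableSet.subtype_image
      (((continuousOn_iff_continuous_restrict.mp hrest).measurable) hMmeas)
  -- apply the change of variables inequality
  have hsub : F '' s ⊆ {u : EuclideanSpace ℝ (Fin d) | u i ∈ M} := by
    rintro _ ⟨y, hy, rfl⟩
    simpa [hFi] using hy.2
  have himg0 : volume (F '' s) = 0 :=
    measure_mono_null hsub (slab_null d i hMmeas hM0)
  have hle := lintegral_abs_det_fderiv_le_addHaar_image volume hsmeas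
    (fun x hx => (hFderiv x hx.1).hasFDerivWithinAt) (hinj.mono (by simp [hsdef]))
  rw [himg0, le_zero_iff] at hle
  have haem := aemeasurable_ofReal_abs_det_fderivWithin volume hsmeas
    (fun x hx => (hFderiv x hx.1).hasFDerivWithinAt)
  rw [lintegral_eq_zero_iff' haem] at hle
  have hae : ∀ᵐ x ∂(volume.restrict s), x ∉ s := by
    filter_upwards [hle] with x hx
    intro hxs
    have hdet : (F' x).det = fderiv ℝ φ x v := det_aux d i (fderiv ℝ φ x)
    have hne := hdi x hxs.1
    rw [Pi.zero_apply, ENNReal.ofReal_eq_zero] at hx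
    have habs : |(F' x).det| > 0 := by
      rw [hdet]; exact abs_pos.mpr hne
    linarith
  have hs0 : volume s = 0 := by
    have hfalse : ∀ᵐ x ∂(volume.restrict s), False := by
      filter_upwards [ae_restrict_mem hsmeas, hae] with x h1 h2 using h2 h1
    have h0 : volume.restrict s Set.univ = 0 := by
      simpa [ae_iff] using hfalse
    refine le_antisymm ?_ zero_le
    calc volume s = volume.restrict s s := (Measure.restrict_apply_self _ _).symm
    _ ≤ volume.restrict s Set.univ := measure_mono (subset_univ s)
    _ = 0 := h0
  exact measure_mono_null (fun y hy => Set.mem_inter hy.1 (hBM hy.2)) hs0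

lemma grad_ne_null (d : ℕ) {V : Set (EuclideanSpace ℝ (Fin d))} (hV : IsOpen V)
    {φ : EuclideanSpace ℝ (Fin d) → ℝ} (hφ : AnalyticOnNhd ℝ φ V)
    {B : Set ℝ} (hB : volume B = 0) :
    volume {y | y ∈ V ∧ φ y ∈ B ∧ fderiv ℝ φ y ≠ 0} = 0 := by
  classical
  set P := {y | y ∈ V ∧ φ y ∈ B ∧ fderiv ℝ φ y ≠ 0} with hPdef
  -- for each x ∈ P, find a good ball
  have hloc : ∀ x : P, ∃ W : Set (EuclideanSpace ℝ (Fin d)),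
      IsOpen W ∧ (x : EuclideanSpace ℝ (Fin d)) ∈ W ∧ W ⊆ V ∧
      volume {y | y ∈ W ∧ φ y ∈ B} = 0 := by
    rintro ⟨x, hxV, hxB, hxd⟩
    obtain ⟨i, hi⟩ := clm_exists_basis_ne_zero d hxd
    have hfc : ContinuousOn (fderiv ℝ φ) V := (hφ.fderiv).continuousOn
    have hca : ContinuousAt (fun y => fderiv ℝ φ y (EuclideanSpace.single i 1)) x := by
      have h1 : ContinuousAt (fderiv ℝ φ) x := hfc.continuousAt (hV.mem_nhds hxV)
      exact (ContinuousLinearMap.apply ℝ ℝ (EuclideanSpace.single i 1)).continuous.continuousAt.comp h1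
    have hne : ∀ᶠ y in nhds x, fderiv ℝ φ y (EuclideanSpace.single i 1) ≠ 0 :=
      hca.eventually_ne hi
    have hmem : ∀ᶠ y in nhds x, y ∈ V := hV.mem_nhds hxV
    obtain ⟨r, hr, hball⟩ := Metric.mem_nhds_iff.mp (hne.and hmem)
    refine ⟨Metric.ball x r, Metric.isOpen_ball, Metric.mem_ball_self hr,
      fun y hy => (hball hy).2, ?_⟩
    exact local_null d Metric.isOpen_ball (convex_ball x r)
      (hφ.mono fun y hy => (hball hy).2) i (fun y hy => (hball hy).1) hB
  choose W hWo hWx hWV hWnull using hloc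
  obtain ⟨T, hTc, hTeq⟩ := TopologicalSpace.isOpen_iUnion_countable W hWo
  have hcover : P ⊆ ⋃ x ∈ T, {y | y ∈ W x ∧ φ y ∈ B} := by
    intro y hy
    have hyW : y ∈ ⋃ x, W x := mem_iUnion.mpr ⟨⟨y, hy⟩, hWx ⟨y, hy⟩⟩
    rw [← hTeq] at hyW
    obtain ⟨x, hxT, hyWx⟩ := mem_iUnion₂.mp hyW
    exact mem_iUnion₂.mpr ⟨x, hxT, hyWx, hy.2.1⟩
  refine measure_mono_null hcover ?_
  exact (measure_biUnion_null_iff hTc).mpr fun x _ => hWnull x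

lemma zero_set_null (d : ℕ) {V : Set (EuclideanSpace ℝ (Fin d))} (hVo : IsOpen V)
    (hVc : IsPreconnected V) {φ : EuclideanSpace ℝ (Fin d) → ℝ}
    (hφ : AnalyticOnNhd ℝ φ V) (hnz : ∃ x ∈ V, φ x ≠ 0) :
    volume {y | y ∈ V ∧ φ y = 0} = 0 := by
  classical
  set DD : EuclideanSpace ℝ (Fin d) → (EuclideanSpace ℝ (Fin d) → ℝ) →
      (EuclideanSpace ℝ (Fin d) → ℝ) := fun v ψ => fun z => fderiv ℝ ψ z v with hDDdef
  have hDan : ∀ (v : EuclideanSpace ℝ (Fin d)) (k : ℕ), AnalyticOnNhd ℝ ((DD v)^[k] φ) V := by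
    intro v k
    induction k with
    | zero => exact hφ
    | succ k ih =>
      rw [Function.iterate_succ_apply']
      exact (ContinuousLinearMap.apply ℝ ℝ v).comp_analyticOnNhd ih.fderiv
  obtain ⟨D, hDc, hDd⟩ := TopologicalSpace.exists_countable_dense (EuclideanSpace ℝ (Fin d))
  -- the key pointwise claim
  have key : ∀ x ∈ V, φ x = 0 →
      ∃ v ∈ D, ∃ m : ℕ, (DD v)^[m] φ x = 0 ∧ fderiv ℝ ((DD v)^[m] φ) x ≠ 0 := by
    intro x hxV hx0
    by_contra hcon
    push_neg at hcon
    -- all iterated directional derivatives vanish at x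
    have hall : ∀ v ∈ D, ∀ k : ℕ, (DD v)^[k] φ x = 0 := by
      intro v hv k
      induction k with
      | zero => exact hx0
      | succ k ih =>
        have h1 := hcon v hv k ih
        rw [Function.iterate_succ_apply']
        show fderiv ℝ ((DD v)^[k] φ) x v = 0
        rw [h1]
        rfl
    -- hence φ vanishes on a ball around x
    obtain ⟨r, hr, hball⟩ := Metric.isOpen_iff.mp hVo x hxV
    have claim1 : ∀ v ∈ D, ‖v‖ < r → φ (x + v) = 0 := by
      intro v hvD hvr
      by_cases hv0 : v = 0
      · subst hv0; simpa using hx0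
      have hvn : 0 < ‖v‖ := norm_pos_iff.mpr hv0
      set a : ℝ := r / ‖v‖ with hadef
      have ha : 0 < a := div_pos hr hvn
      have h1a : 1 < a := (one_lt_div hvn).mpr hvr
      set I : Set ℝ := Metric.ball (0:ℝ) a with hIdef
      set L : ℝ → EuclideanSpace ℝ (Fin d) := fun t => x + t • v with hLdef
      have hLmem : ∀ t ∈ I, L t ∈ Metric.ball x r := by
        intro t ht
        have htlt : |t| < a := by simpa [hIdef, Real.dist_eq] using ht
        have : dist (L t) x = |t| * ‖v‖ := by
          simp [hLdef, dist_eq_norm, norm_smul, abs_mul]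
        rw [Metric.mem_ball, this]
        calc |t| * ‖v‖ < a * ‖v‖ := by gcongr
        _ = r := by rw [hadef, div_mul_cancel₀ r hvn.ne']
      have hLV : ∀ t ∈ I, L t ∈ V := fun t ht => hball (hLmem t ht)
      have hLan : AnalyticOnNhd ℝ L I := by
        apply AnalyticOnNhd.add analyticOnNhd_const
        have : (fun t : ℝ => t • v)
            = fun t => ((ContinuousLinearMap.id ℝ ℝ).smulRight v) t := by
          funext t; simp
        rw [this]
        exact ContinuousLinearMap.analyticOnNhd _ _
      have hψan : AnalyticOnNhd ℝ (φ ∘ L) I := hφ.comp hLan hLV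
      -- derivatives along the line
      have hder : ∀ k : ℕ, ∀ t ∈ I, HasDerivAt ((DD v)^[k] φ ∘ L) ((DD v)^[k+1] φ (L t)) t := by
        intro k t ht
        have hL' : HasDerivAt L v t := by
          simpa [hLdef] using ((hasDerivAt_id t).smul_const v).const_add x
        have hχ : HasFDerivAt ((DD v)^[k] φ) (fderiv ℝ ((DD v)^[k] φ) (L t)) (L t) :=
          ((hDan v k (L t) (hLV t ht)).differentiableAt).hasFDerivAt
        have hc := hχ.comp_hasDerivAt t hL'
        rw [Function.iterate_succ_apply']
        exact hc
      have hiter : ∀ k : ℕ, Set.EqOn (deriv^[k] (φ ∘ L)) ((DD v)^[k] φ ∘ L) I := by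
        intro k
        induction k with
        | zero => intro t _; rfl
        | succ k ih =>
          intro t ht
          rw [Function.iterate_succ_apply']
          have hev : deriv^[k] (φ ∘ L) =ᶠ[nhds t] ((DD v)^[k] φ ∘ L) :=
            Filter.eventuallyEq_of_mem (Metric.isOpen_ball.mem_nhds ht) ih
          rw [hev.deriv_eq]
          exact (hder k t ht).deriv
      have h0I : (0:ℝ) ∈ I := by simpa [hIdef] using ha
      obtain ⟨p, hp⟩ := hψan 0 h0I
      obtain ⟨rp, hrp⟩ := hp
      have hev0 : (φ ∘ L) =ᶠ[nhds (0:ℝ)] 0 := by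
        have hzero : ∀ y ∈ EMetric.ball (0:ℝ) rp, (φ ∘ L) (0 + y) = 0 := by
          intro y hy
          have hsum := hrp.hasSum_iteratedFDeriv hy
          have hterm : ∀ n : ℕ, iteratedFDeriv ℝ n (φ ∘ L) 0 (fun _ => y) = 0 := by
            intro n
            have h1 : (fun _ : Fin n => y) = fun _ : Fin n => y • (1:ℝ) := by
              funext _; simp
            have h2 : iteratedFDeriv ℝ n (φ ∘ L) 0 (fun _ => y)
                = (∏ _j : Fin n, y) • iteratedFDeriv ℝ n (φ ∘ L) 0 (fun _ => (1:ℝ)) := by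
              rw [h1, ContinuousMultilinearMap.map_smul_univ]
              simp
            have h3 : iteratedFDeriv ℝ n (φ ∘ L) 0 (fun _ : Fin n => (1:ℝ))
                = iteratedDeriv n (φ ∘ L) 0 := (iteratedDeriv_eq_iteratedFDeriv).symm
            have h4 : iteratedDeriv n (φ ∘ L) 0 = 0 := by
              rw [iteratedDeriv_eq_iterate]
              rw [hiter n h0I]
              show (DD v)^[n] φ (L 0) = 0
              have : L 0 = x := by simp [hLdef]
              rw [this]
              exact hall v hvD n
            rw [h2, h3, h4, smul_zero]
          have : HasSum (fun _ : ℕ => (0:ℝ)) ((φ ∘ L) (0 + y)) := by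
            simpa only [hterm, smul_zero] using hsum
          simpa using (hasSum_zero.unique this).symm
        filter_upwards [EMetric.ball_mem_nhds (0:ℝ) hrp.r_pos] with y hy
        simpa using hzero y hy
      have hEqI : Set.EqOn (φ ∘ L) 0 I :=
        hψan.eqOn_zero_of_preconnected_of_eventuallyEq_zero
          (convex_ball (0:ℝ) a).isPreconnected h0I hev0
      have h1I : (1:ℝ) ∈ I := by simpa [hIdef, Real.dist_eq] using h1a
      have := hEqI h1I
      simpa [hLdef] using this
    -- density: φ vanishes on the whole ball around x
    have claim2 : ∀ w ∈ Metric.ball x r, φ w = 0 := by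
      intro w hw
      set f : EuclideanSpace ℝ (Fin d) → ℝ := fun u => φ (x + u) with hfdef
      have hcontf : ContinuousOn f (Metric.ball 0 r) := by
        apply (hφ.continuousOn).comp (by fun_prop)
        intro u hu
        apply hball
        simpa [Metric.mem_ball, dist_eq_norm] using hu
      set A : Set (EuclideanSpace ℝ (Fin d)) := D ∩ Metric.ball 0 r with hAdef
      have hA0 : ∀ u ∈ A, f u = 0 := by
        rintro u ⟨huD, hur⟩
        exact claim1 u huD (by simpa [Metric.mem_ball, dist_eq_norm] using hur)
      have hwball : w - x ∈ Metric.ball (0 : EuclideanSpace ℝ (Fin d)) r := by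
        simpa [Metric.mem_ball, dist_eq_norm] using hw
      have hclos : w - x ∈ closure A := by
        have := hDd.open_subset_closure_inter (Metric.isOpen_ball (x := (0 : EuclideanSpace ℝ (Fin d))) (ε := r))
        have h2 := this hwball
        rw [hAdef]
        rw [Set.inter_comm]
        exact h2
      have hne : (nhdsWithin (w - x) A).NeBot := mem_closure_iff_nhdsWithin_neBot.mp hclos
      have h1 : Filter.Tendsto f (nhdsWithin (w - x) A) (nhds (f (w - x))) :=
        ((hcontf.continuousWithinAt hwball).mono_left
          (nhdsWithin_mono _ (Set.inter_subset_right)))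
      have h2 : Filter.Tendsto f (nhdsWithin (w - x) A) (nhds 0) := by
        apply Filter.Tendsto.congr' _ tendsto_const_nhds
        filter_upwards [self_mem_nhdsWithin] with u hu
        exact (hA0 u hu).symm
      have hfwx : f (w - x) = 0 := tendsto_nhds_unique h1 h2
      simpa [hfdef] using hfwx
    -- so φ is eventually zero at x, contradicting hnz via the identity theorem
    have hevx : φ =ᶠ[nhds x] 0 := by
      filter_upwards [Metric.ball_mem_nhds x hr] with w hw
      exact claim2 w hw
    obtain ⟨x₀, hx₀V, hx₀⟩ := hnz
    exact hx₀ (hφ.eqOn_zero_of_preconnected_of_eventuallyEq_zero hVc hxV hevx hx₀V)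
  -- covering by countably many null sets
  have hcover : {y | y ∈ V ∧ φ y = 0} ⊆
      ⋃ v ∈ D, ⋃ m : ℕ, {y | y ∈ V ∧ (DD v)^[m] φ y ∈ ({0} : Set ℝ) ∧
        fderiv ℝ ((DD v)^[m] φ) y ≠ 0} := by
    rintro y ⟨hyV, hy0⟩
    obtain ⟨v, hvD, m, h1, h2⟩ := key y hyV hy0
    exact mem_iUnion₂.mpr ⟨v, hvD, mem_iUnion.mpr ⟨m, ⟨hyV, by simpa using h1, h2⟩⟩⟩
  refine measure_mono_null hcover ?_
  refine (measure_biUnion_null_iff hDc).mpr fun v _ => ?_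
  refine measure_iUnion_null fun m => ?_
  exact grad_ne_null d hVo (hDan v m) (by simp)

/-- If `g` is real analytic and not constant on a connected open set `U ⊆ ℝ^d` (`d ≥ 1`),
then the preimage in `U` of any set `B ⊆ ℝ` of one-dimensional Lebesgue measure zero has
`d`-dimensional Lebesgue measure zero. -/
theorem stmt_8 (d : ℕ) (hd : 1 ≤ d) (U : Set (EuclideanSpace ℝ (Fin d)))
    (hU : IsOpen U) (hUconn : IsConnected U)
    (g : EuclideanSpace ℝ (Fin d) → ℝ) (hg : AnalyticOnNhd ℝ g U)
    (hnc : ¬ ∃ c : ℝ, ∀ x ∈ U, g x = c) :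
    ∀ B : Set ℝ, volume B = 0 → volume {x | x ∈ U ∧ g x ∈ B} = 0 := by
  intro B hB
  -- there is a point where the derivative of `g` does not vanish
  have hfd : ∃ x ∈ U, fderiv ℝ g x ≠ 0 := by
    by_contra h
    push_neg at h
    apply hnc
    obtain ⟨x₀, hx₀⟩ := hUconn.nonempty
    refine ⟨g x₀, fun x hx => ?_⟩
    have hev : g =ᶠ[nhds x₀] (fun _ => g x₀) := by
      obtain ⟨r, hr, hball⟩ := Metric.isOpen_iff.mp hU x₀ hx₀
      have hconst : ∀ y ∈ Metric.ball x₀ r, g y = g x₀ := by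
        intro y hy
        have hdiff : DifferentiableOn ℝ g (Metric.ball x₀ r) := fun z hz =>
          ((hg z (hball hz)).differentiableAt).differentiableWithinAt
        refine (convex_ball x₀ r).is_const_of_fderivWithin_eq_zero hdiff ?_
          hy (Metric.mem_ball_self hr)
        intro z hz
        rw [fderivWithin_of_isOpen Metric.isOpen_ball hz]
        exact h z (hball hz)
      filter_upwards [Metric.ball_mem_nhds x₀ hr] with y hy
      exact hconst y hy
    exact hg.eqOn_of_preconnected_of_eventuallyEq analyticOnNhd_const
      hUconn.isPreconnected hx₀ hev hx
  obtain ⟨x₁, hx₁U, hx₁⟩ := hfd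
  obtain ⟨i, hi⟩ := clm_exists_basis_ne_zero d hx₁
  set ψ : EuclideanSpace ℝ (Fin d) → ℝ :=
    fun y => fderiv ℝ g y (EuclideanSpace.single i 1) with hψdef
  have hψan : AnalyticOnNhd ℝ ψ U := by
    have h1 := (ContinuousLinearMap.apply ℝ ℝ
      ((EuclideanSpace.single i 1 : EuclideanSpace ℝ (Fin d)))).comp_analyticOnNhd hg.fderiv
    have h2 : (⇑(ContinuousLinearMap.apply ℝ ℝ ((EuclideanSpace.single i 1 : EuclideanSpace ℝ (Fin d))))
        ∘ fderiv ℝ g) = ψ := by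
      funext y
      simp [hψdef]
    rwa [h2] at h1
  have hS : volume {y | y ∈ U ∧ ψ y = 0} = 0 :=
    zero_set_null d hU hUconn.isPreconnected hψan ⟨x₁, hx₁U, hi⟩
  have hN : volume {y | y ∈ U ∧ g y ∈ B ∧ fderiv ℝ g y ≠ 0} = 0 :=
    grad_ne_null d hU hg hB
  have hcover : {x | x ∈ U ∧ g x ∈ B} ⊆
      {y | y ∈ U ∧ g y ∈ B ∧ fderiv ℝ g y ≠ 0} ∪ {y | y ∈ U ∧ ψ y = 0} := by
    rintro x ⟨hxU, hxB⟩
    by_cases hx : fderiv ℝ g x = 0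
    · exact Or.inr ⟨hxU, by simp [hψdef, hx]⟩
    · exact Or.inl ⟨hxU, hxB, hx⟩
  exact measure_mono_null hcover (measure_union_null hN hS)
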